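/- Let M be an infinite subset of ℕ, and let [M]^{<ω} be partitioned into finitely many pieces P₁, ..., P_n. Then there exist an infinite subset L of M and an index i such that A_ω ∩ [L]^{<ω} ⊆ P_i. -/
import Mathlib

/-- Generic diagonalization lemma: if below every infinite set we can find an infinite
homogeneous set for the coloring `s ↦ c (insert a s)` of `k a`-element sets (for each `a`),
then there is an infinite `L ⊆ M` and a single color working for all `a ∈ L` with
`s ⊆ L` above `a` of size `k a`. -/
lemma diagonal (C : Type) [Finite C] (c : Finset ℕ → C) (k : ℕ → ℕ) (M : Set ℕ)
    (hM : M.Infinite)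
    (H : ∀ N : Set ℕ, N.Infinite → ∀ a : ℕ,
      ∃ L ⊆ N, L.Infinite ∧ ∃ i : C, ∀ s : Finset ℕ, ↑s ⊆ L → s.card = k a →
        c (insert a s) = i) :
    ∃ L ⊆ M, L.Infinite ∧ ∃ i : C, ∀ x ∈ L, ∀ s : Finset ℕ, ↑s ⊆ L →
      (∀ y ∈ s, x < y) → s.card = k x → c (insert x s) = i := by
  have step : ∀ N : Set ℕ, N.Infinite →
      ∃ L : Set ℕ, ∃ i : C, L ⊆ N ∩ Set.Ioi (sInf N) ∧ L.Infinite ∧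
        ∀ s : Finset ℕ, ↑s ⊆ L → s.card = k (sInf N) → c (insert (sInf N) s) = i := by
    intro N hN
    have hN' : (N ∩ Set.Ioi (sInf N)).Infinite := by
      have : N \ Set.Ioi (sInf N) ⊆ Set.Iic (sInf N) := by
        intro x hx
        exact le_of_not_gt (by simpa using hx.2)
      have hfin : (N \ Set.Ioi (sInf N)).Finite :=
        (Set.finite_Iic (sInf N)).subset this
      have := hN.diff hfin
      refine this.mono ?_
      intro x hx
      exact ⟨hx.1, by by_contra h; exact hx.2 ⟨hx.1, h⟩⟩
    obtain ⟨L, hLsub, hLinf, i, hi⟩ := H _ hN' (sInf N)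
    exact ⟨L, i, hLsub, hLinf, hi⟩
  choose F I hsub hinf hhom using step
  -- the recursive sequence of infinite sets
  let seq : ℕ → {N : Set ℕ // N.Infinite} := fun j =>
    Nat.rec ⟨M, hM⟩ (fun _ p => ⟨F p.1 p.2, hinf p.1 p.2⟩) j
  have seq_succ : ∀ j, (seq (j + 1)).1 = F (seq j).1 (seq j).2 := fun j => rfl
  let a : ℕ → ℕ := fun j => sInf (seq j).1
  let col : ℕ → C := fun j => I (seq j).1 (seq j).2
  have ha_mem : ∀ j, a j ∈ (seq j).1 := fun j => Nat.sInf_mem (seq j).2.nonempty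
  have hstep : ∀ j, (seq (j + 1)).1 ⊆ (seq j).1 ∩ Set.Ioi (a j) := fun j =>
    hsub (seq j).1 (seq j).2
  have hmono : ∀ j j', j ≤ j' → (seq j').1 ⊆ (seq j).1 := by
    intro j j' h
    induction h with
    | refl => exact fun x hx => hx
    | step h ih => exact fun x hx => ih ((hstep _ hx).1)
  have ha_lt : StrictMono a := by
    apply strictMono_nat_of_lt_succ
    intro j
    exact (hstep j (ha_mem (j + 1))).2
  obtain ⟨i, hi⟩ := Finite.exists_infinite_fiber col
  have hJ : (col ⁻¹' {i}).Infinite := Set.infinite_coe_iff.mp hi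
  refine ⟨a '' (col ⁻¹' {i}), ?_, hJ.image (ha_lt.injective.injOn), i, ?_⟩
  · rintro x ⟨j, _, rfl⟩
    exact hmono 0 j (Nat.zero_le j) (ha_mem j)
  · rintro x ⟨j, hj, rfl⟩ s hsL hgt hcard
    have hsub' : ↑s ⊆ (seq (j + 1)).1 := by
      intro y hy
      obtain ⟨j', _, rfl⟩ := hsL hy
      have : j < j' := ha_lt.lt_iff_lt.mp (hgt _ hy)
      exact hmono (j + 1) j' this (ha_mem j')
    have := hhom (seq j).1 (seq j).2 s (by rw [← seq_succ]; exact hsub') hcard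
    rw [this]
    exact hj

/-- Infinite Ramsey theorem for `k`-element subsets of an infinite set of naturals. -/
lemma inf_ramsey (C : Type) [Finite C] [Nonempty C] (k : ℕ) (c : Finset ℕ → C)
    (M : Set ℕ) (hM : M.Infinite) :
    ∃ L ⊆ M, L.Infinite ∧ ∃ i : C, ∀ s : Finset ℕ, ↑s ⊆ L → s.card = k → c s = i := by
  induction k generalizing c M with
  | zero =>
    refine ⟨M, le_refl M, hM, c ∅, ?_⟩
    intro s _ hcard
    rw [Finset.card_eq_zero.mp hcard]
  | succ k ih =>
    obtain ⟨L, hLM, hLinf, i, hi⟩ :=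
      diagonal C c (fun _ => k) M hM (fun N hN a => ih (fun t => c (insert a t)) N hN)
    refine ⟨L, hLM, hLinf, i, ?_⟩
    intro s hsL hcard
    have hne : s.Nonempty := Finset.card_pos.mp (by omega)
    set x := s.min' hne with hx
    have hxs : x ∈ s := s.min'_mem hne
    have hxL : x ∈ L := hsL hxs
    have herase : ↑(s.erase x) ⊆ L := fun y hy => hsL (Finset.erase_subset x s hy)
    have hgt : ∀ y ∈ s.erase x, x < y := by
      intro y hy
      exact lt_of_le_of_ne (s.min'_le y (Finset.mem_of_mem_erase hy))
        (Ne.symm (Finset.ne_of_mem_erase hy))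
    have hcard' : (s.erase x).card = k := by
      rw [Finset.card_erase_of_mem hxs, hcard]
      omega
    have := hi x hxL (s.erase x) herase hgt hcard'
    rwa [Finset.insert_erase hxs] at this

/-- The thin Schreier family `A_ω`: nonempty finite sets whose minimum equals their cardinality. -/
def Aomega : Set (Finset ℕ) := {s | ∃ h : s.Nonempty, s.min' h = s.card}

/-- Corollary 1.8 for `ξ = ω`: for every finite partition of `[M]^{<ω}` there are an infinite
`L ⊆ M` and a piece containing `A_ω ∩ [L]^{<ω}`. -/
theorem partition_omega (M : Set ℕ) (hM : M.Infinite) (n : ℕ) (P : Fin n → Set (Finset ℕ))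
    (hcover : ∀ s : Finset ℕ, ↑s ⊆ M → ∃ i, s ∈ P i)
    (hdisj : ∀ i j, i ≠ j → ∀ s : Finset ℕ, s ∈ P i → s ∉ P j) :
    ∃ L ⊆ M, L.Infinite ∧ ∃ i, ∀ s ∈ Aomega, ↑s ⊆ L → s ∈ P i := by
  rcases Nat.eq_zero_or_pos n with rfl | hn
  · obtain ⟨i, -⟩ := hcover ∅ (by simp)
    exact absurd i.2 (Nat.not_lt_zero i.1)
  haveI : Nonempty (Fin n) := ⟨⟨0, hn⟩⟩
  classical
  set c : Finset ℕ → Fin n := fun s =>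
    if h : ↑s ⊆ M then (hcover s h).choose else Classical.arbitrary _ with hc
  obtain ⟨L, hLM, hLinf, i, hi⟩ :=
    diagonal (Fin n) c (fun x => x - 1) M hM
      (fun N hN a => inf_ramsey (Fin n) (a - 1) (fun t => c (insert a t)) N hN)
  refine ⟨L, hLM, hLinf, i, ?_⟩
  rintro s ⟨hne, hmin⟩ hsL
  set x := s.min' hne with hx
  have hxs : x ∈ s := s.min'_mem hne
  have hxL : x ∈ L := hsL hxs
  have herase : ↑(s.erase x) ⊆ L := fun y hy => hsL (Finset.erase_subset x s hy)
  have hgt : ∀ y ∈ s.erase x, x < y := by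
    intro y hy
    exact lt_of_le_of_ne (s.min'_le y (Finset.mem_of_mem_erase hy))
      (Ne.symm (Finset.ne_of_mem_erase hy))
  have hcard' : (s.erase x).card = x - 1 := by
    rw [Finset.card_erase_of_mem hxs, ← hmin]
  have hcs : c s = i := by
    have := hi x hxL (s.erase x) herase hgt hcard'
    rwa [Finset.insert_erase hxs] at this
  have hsM : ↑s ⊆ M := hsL.trans hLM
  have : c s = (hcover s hsM).choose := by rw [hc]; simp [hsM]
  have hspec := (hcover s hsM).choose_spec
  rw [← this, hcs] at hspec
  exact hspec
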